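/- Properties of the semicircle Stieltjes transform: For all z = E + iη with η > 0 one has |m_sc(z)| = |m_sc(z) + z|⁻¹ ≤ 1. Moreover there is a constant c > 0 such that for E ∈ [−10, 10] and η ∈ (0, 10], writing κ := ||E| − 2|: (i) c ≤ |m_sc(z)| ≤ 1 − cη; (ii) |∂_z m_sc(z)| ≤ c⁻¹(κ + η)^{−1/2}; (iii) |1 − m_sc(z)²| ≍ √(κ + η); (iv) Im m_sc(z) ≍ √(κ + η) if |E| ≤ 2 and Im m_sc(z) ≍ η/√(κ + η) if |E| ≥ 2. -/

import Mathlib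

open MeasureTheory ProbabilityTheory Matrix Finset
open scoped Classical

noncomputable section

namespace RBM

/-- Integer representative of `x : Fin N` in `(-N/2, N/2]`. -/
def rep {N : ℕ} (x : Fin N) : ℤ :=
  if 2 * x.val ≤ N then (x.val : ℤ) else (x.val : ℤ) - N

/-- Periodic distance `|x|` on `ℤ_N`, as a real number. -/
def zdist {N : ℕ} (x : Fin N) : ℝ := |(rep x : ℝ)|

/-- The block of indices `⟦1, W⟧` inside `ℤ_N`. -/
def inBlock {N : ℕ} (W : ℕ) (i : Fin N) : Prop := 1 ≤ i.val ∧ i.val ≤ W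

/-- Band variance profile `s_{ij} = f(i-j)` with band width `W`. -/
structure IsBandProfile {N : ℕ} (W : ℕ) (cs Cs : ℝ) (f : Fin N → ℝ) : Prop where
  nonneg : ∀ x, 0 ≤ f x
  symm : ∀ i j : Fin N, f (i - j) = f (j - i)
  sum_one : ∑ x, f x = 1
  lower : ∀ x, zdist x ≤ W → cs / W ≤ f x
  upper : ∀ x, f x ≤ if zdist x ≤ Cs * W then Cs / W else 0

/-- Entries of the variance matrix `S_ζ`. -/
def sZeta {N : ℕ} (W : ℕ) (ζ : ℝ) (f : Fin N → ℝ) (i j : Fin N) : ℝ :=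
  f (i - j) - (if inBlock W i ∧ inBlock W j then ζ * (1 + if i = j then 1 else 0) / W else 0)

/-- The random band matrix ensemble `H_ζ`: real symmetric, centered independent entries with
variance profile `S_ζ`, and all moments controlled by the standard deviation. -/
structure IsBandEnsemble {N : ℕ} (W : ℕ) (cs Cs : ℝ) (μmom : ℕ → ℝ) (ζ : ℝ)
    {Ω : Type*} [MeasurableSpace Ω] (P : Measure Ω)
    (f : Fin N → ℝ) (H : Ω → Matrix (Fin N) (Fin N) ℝ) : Prop where
  profile : IsBandProfile W cs Cs f
  meas : ∀ i j, Measurable fun ω => H ω i j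
  symm : ∀ ω, (H ω).IsSymm
  indep : iIndepFun
    (fun (p : {p : Fin N × Fin N // p.1 ≤ p.2}) ω => H ω p.1.1 p.1.2) P
  centered : ∀ i j, ∫ ω, H ω i j ∂P = 0
  variance : ∀ i j, ∫ ω, (H ω i j) ^ 2 ∂P = sZeta W ζ f i j
  moment : ∀ (p : ℕ) (i j), ∫ ω, |H ω i j| ^ p ∂P ≤ μmom p ^ p * sZeta W ζ f i j ^ ((p : ℝ) / 2)

/-- The deterministic diagonal matrix with the two spectral parameters. -/
def Zmat {N : ℕ} (W : ℕ) (z zt : ℂ) : Matrix (Fin N) (Fin N) ℂ :=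
  Matrix.diagonal fun i => if inBlock W i then z else zt

/-- The generalized resolvent `G_ζ^g(z, z̃)` of `H_ζ - diag g`. -/
def resolvent {N : ℕ} (W : ℕ) (g : Fin N → ℝ) (H : Matrix (Fin N) (Fin N) ℝ)
    (z zt : ℂ) : Matrix (Fin N) (Fin N) ℂ :=
  ((H - Matrix.diagonal g).map (fun x => (x : ℂ)) - Zmat W z zt)⁻¹

/-- The `T`-matrix `T_{ij} = ∑_k (S_ζ)_{ik} |G_{kj}|²`. -/
def Tmat {N : ℕ} (W : ℕ) (ζ : ℝ) (f : Fin N → ℝ)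
    (G : Matrix (Fin N) (Fin N) ℂ) (i j : Fin N) : ℝ :=
  ∑ k, sZeta W ζ f i k * norm (G k j) ^ 2

/-- The self-consistent equation for the vector `M`. -/
def IsSCSolution {N : ℕ} (W : ℕ) (ζ : ℝ) (f : Fin N → ℝ) (g : Fin N → ℝ)
    (z zt : ℂ) (M : Fin N → ℂ) : Prop :=
  ∀ i, (M i)⁻¹ =
    -(if inBlock W i then z else zt) - (g i : ℂ) - ∑ j, (sZeta W ζ f i j : ℂ) * M j

/-- Stieltjes transform of the semicircle law (the branch mapping `ℂ⁺` to `ℂ⁺`). -/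
def msc (z : ℂ) : ℂ := z * (-1 + (1 - 4 / z ^ 2) ^ ((1 : ℂ) / 2)) / 2

/-- Boundary value `m_sc(z̃ + i·0⁺)` for `z̃ ∈ ℂ⁺ ∪ ℝ`. -/
def mscB (z : ℂ) : ℂ :=
  if 0 < z.im then msc z
  else (-z + Complex.I * (Real.sqrt (4 - z.re ^ 2) : ℝ)) / 2

/-- The σ-algebra generated by the matrix minor obtained by removing row and column `k`. -/
def minorSigma {N : ℕ} {Ω : Type*} [MeasurableSpace Ω]
    (H : Ω → Matrix (Fin N) (Fin N) ℝ) (k : Fin N) : MeasurableSpace Ω :=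
  MeasurableSpace.comap
    (fun ω (p : {p : Fin N × Fin N // p.1 ≠ k ∧ p.2 ≠ k}) => H ω p.1.1 p.1.2) inferInstance

/-- The matrix `1 - M² S_ζ` (with `M²` the diagonal matrix with entries `M_i²`). -/
def oneSubM2S {N : ℕ} (W : ℕ) (ζ : ℝ) (f : Fin N → ℝ) (M : Fin N → ℂ) :
    Matrix (Fin N) (Fin N) ℂ :=
  1 - (Matrix.diagonal fun i => (M i) ^ 2) * (Matrix.of fun i j => ((sZeta W ζ f i j : ℝ) : ℂ))

/-- The real matrix `1 - S_ζ |M|²` (with `|M|²` the diagonal matrix with entries `|M_j|²`). -/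
def oneSubSM2 {N : ℕ} (W : ℕ) (ζ : ℝ) (f : Fin N → ℝ) (M : Fin N → ℂ) :
    Matrix (Fin N) (Fin N) ℝ :=
  1 - (Matrix.of fun i j => sZeta W ζ f i j) * (Matrix.diagonal fun j => norm (M j) ^ 2)

/-- The `ℓ∞ → ℓ∞` operator norm of a complex matrix (maximal absolute row sum). -/
def rowSumNorm {N : ℕ} (A : Matrix (Fin N) (Fin N) ℂ) : ℝ := ⨆ i, ∑ j, norm (A i j)

end RBM

open RBM

set_option maxHeartbeats 1000000

open Complex

lemma hz0 {z : ℂ} (hz : 0 < z.im) : z ≠ 0 := by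
  intro h; rw [h] at hz; simp at hz

lemma zsq_ne {z : ℂ} (hz : 0 < z.im) : z ^ 2 ≠ 0 := pow_ne_zero _ (hz0 hz)

lemma u_im_re {z : ℂ} (hz : 0 < z.im) :
    (1 - 4 / z ^ 2).im = 0 → 0 < (1 - 4 / z ^ 2).re := by
  intro h
  have h2 : (z ^ 2) ≠ 0 := zsq_ne hz
  have hn : 0 < normSq (z ^ 2) := normSq_pos.2 h2
  have him : (1 - 4 / z ^ 2).im = 4 * (z ^ 2).im / normSq (z ^ 2) := by
    rw [div_eq_mul_inv]
    simp [Complex.sub_im, Complex.mul_im, Complex.inv_re, Complex.inv_im]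
    ring
  have hre : (1 - 4 / z ^ 2).re = 1 - 4 * (z ^ 2).re / normSq (z ^ 2) := by
    rw [div_eq_mul_inv]
    simp [Complex.sub_re, Complex.mul_re, Complex.inv_re, Complex.inv_im]
    ring
  rw [him] at h
  have him2 : (z ^ 2).im = 0 := by
    rcases div_eq_zero_iff.1 h with h' | h'
    · linarith
    · exact absurd h' (ne_of_gt hn)
  have hre0 : (z ^ 2).re < 0 := by
    have : (z ^ 2).im = 2 * z.re * z.im := by simp [pow_two, Complex.mul_im]; ring
    rw [this] at him2
    have hre' : z.re = 0 := by
      rcases mul_eq_zero.1 him2 with h' | h'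
      · rcases mul_eq_zero.1 h' with h'' | h''
        · norm_num at h''
        · exact h''
      · exact absurd h' (ne_of_gt hz)
    have : (z ^ 2).re = z.re * z.re - z.im * z.im := by simp [pow_two, Complex.mul_re]
    rw [this, hre']
    nlinarith
  rw [hre]
  have : 4 * (z ^ 2).re / normSq (z ^ 2) < 0 := by
    apply div_neg_of_neg_of_pos _ hn
    nlinarith
  linarith

lemma u_ne {z : ℂ} (hz : 0 < z.im) : (1 - 4 / z ^ 2) ≠ 0 := by
  intro h
  have := u_im_re hz (by rw [h]; simp)
  rw [h] at this; simp at this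

lemma w_sq {z : ℂ} (hz : 0 < z.im) :
    ((1 - 4 / z ^ 2) ^ ((1 : ℂ) / 2)) ^ 2 = 1 - 4 / z ^ 2 := by
  have h := u_ne hz
  rw [sq, ← Complex.cpow_add _ _ h]
  norm_num

lemma msc_quad {z : ℂ} (hz : 0 < z.im) : msc z ^ 2 + z * msc z + 1 = 0 := by
  have h2' : (z:ℂ) ≠ 0 := hz0 hz
  obtain ⟨w, hwdef⟩ : ∃ w, (1 - 4 / z ^ 2) ^ ((1 : ℂ) / 2) = w := ⟨_, rfl⟩
  have hw : w ^ 2 = 1 - 4 / z ^ 2 := by rw [← hwdef]; exact w_sq hz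
  have hm : msc z = z * (-1 + w) / 2 := by rw [msc, hwdef]
  rw [hm]
  have hw' : z ^ 2 * w ^ 2 = z ^ 2 - 4 := by rw [hw]; field_simp
  linear_combination hw' / 4

lemma re_w_nonneg (u : ℂ) : 0 ≤ (u ^ ((1 : ℂ) / 2)).re := by
  by_cases hu : u = 0
  · rw [hu, Complex.zero_cpow (by norm_num)]; simp
  · rw [Complex.cpow_def_of_ne_zero hu, Complex.exp_re]
    apply mul_nonneg (Real.exp_nonneg _)
    apply Real.cos_nonneg_of_mem_Icc
    constructor
    · have := Complex.neg_pi_lt_arg u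
      have him : (Complex.log u * (1 / 2)).im = Complex.arg u / 2 := by
        simp [Complex.mul_im, Complex.log_im]; ring
      rw [him]
      have := Real.pi_pos
      linarith
    · have := Complex.arg_le_pi u
      have him : (Complex.log u * (1 / 2)).im = Complex.arg u / 2 := by
        simp [Complex.mul_im, Complex.log_im]; ring
      rw [him]
      have := Real.pi_pos
      linarith

lemma re_w_pos {z : ℂ} (hz : 0 < z.im) : 0 < ((1 - 4 / z ^ 2) ^ ((1 : ℂ) / 2)).re := by
  have hu : (1 - 4 / z ^ 2) ≠ 0 := u_ne hz
  rw [Complex.cpow_def_of_ne_zero hu, Complex.exp_re]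
  have him : (Complex.log (1 - 4 / z ^ 2) * (1 / 2)).im = Complex.arg (1 - 4 / z ^ 2) / 2 := by
    simp [Complex.mul_im, Complex.log_im]; ring
  apply mul_pos (Real.exp_pos _)
  apply Real.cos_pos_of_mem_Ioo
  rw [him]
  constructor
  · have := Complex.neg_pi_lt_arg (1 - 4 / z ^ 2)
    linarith
  · have hle := Complex.arg_le_pi (1 - 4 / z ^ 2)
    have hne : Complex.arg (1 - 4 / z ^ 2) ≠ Real.pi := by
      intro h
      obtain ⟨h1, h2⟩ := (Complex.arg_eq_pi_iff).1 h
      have := u_im_re hz h2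
      linarith
    have := Real.pi_pos
    have : Complex.arg (1 - 4 / z ^ 2) < Real.pi := lt_of_le_of_ne hle hne
    linarith

lemma msc_mul {z : ℂ} (hz : 0 < z.im) : msc z * (msc z + z) = -1 := by
  linear_combination msc_quad hz

lemma msc_ne {z : ℂ} (hz : 0 < z.im) : msc z ≠ 0 := by
  intro h
  have := msc_mul hz
  rw [h] at this
  simp at this

lemma abs_msc_mul {z : ℂ} (hz : 0 < z.im) :
    ‖msc z‖ * ‖msc z + z‖ = 1 := by
  rw [← norm_mul, msc_mul hz]
  simp

lemma abs_msc_lt_one {z : ℂ} (hz : 0 < z.im) : ‖msc z‖ < 1 := by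
  have hw := re_w_pos hz
  obtain ⟨w, hwdef⟩ : ∃ w, (1 - 4 / z ^ 2) ^ ((1 : ℂ) / 2) = w := ⟨_, rfl⟩
  rw [hwdef] at hw
  have hm : msc z = z * (w - 1) / 2 := by rw [msc, hwdef]; ring
  have hmz : msc z + z = z * (w + 1) / 2 := by rw [msc, hwdef]; ring
  have hzpos : 0 < ‖z‖ := by
    exact norm_pos_iff.2 (hz0 hz)
  have e1 : ‖msc z‖ = ‖z‖ * ‖w - 1‖ / 2 := by
    rw [hm, norm_div, norm_mul]; norm_num
  have e2 : ‖msc z + z‖ = ‖z‖ * ‖w + 1‖ / 2 := by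
    rw [hmz, norm_div, norm_mul]; norm_num
  have hns : Complex.normSq (w - 1) < Complex.normSq (w + 1) := by
    simp [Complex.normSq_apply, Complex.sub_re, Complex.sub_im, Complex.add_re, Complex.add_im]
    nlinarith
  have habs : ‖w - 1‖ < ‖w + 1‖ := by
    rw [Complex.norm_def, Complex.norm_def]
    exact Real.sqrt_lt_sqrt (Complex.normSq_nonneg _) hns
  have hlt : ‖msc z‖ < ‖msc z + z‖ := by
    rw [e1, e2]
    have h0 : 0 ≤ ‖w - 1‖ := norm_nonneg _
    nlinarith
  have hmul := abs_msc_mul hz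
  nlinarith [norm_nonneg (msc z)]

lemma normSq_msc_pos {z : ℂ} (hz : 0 < z.im) : 0 < Complex.normSq (msc z) :=
  Complex.normSq_pos.2 (msc_ne hz)

lemma normSq_msc_lt_one {z : ℂ} (hz : 0 < z.im) : Complex.normSq (msc z) < 1 := by
  have h := abs_msc_lt_one hz
  have h2 := Complex.sq_norm (msc z)
  nlinarith [norm_nonneg (msc z)]

lemma im_rel {z : ℂ} (hz : 0 < z.im) :
    (msc z).im * (1 - Complex.normSq (msc z)) = z.im * Complex.normSq (msc z) := by
  have hm := msc_ne hz
  have h : msc z + z = -(msc z)⁻¹ := by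
    field_simp
    linear_combination msc_mul hz
  have him : (msc z).im + z.im = (msc z).im / Complex.normSq (msc z) := by
    have := congrArg Complex.im h
    simp only [Complex.add_im, Complex.neg_im, Complex.inv_im] at this
    rw [this]; ring
  have hn : Complex.normSq (msc z) ≠ 0 := ne_of_gt (normSq_msc_pos hz)
  field_simp at him
  linarith

lemma im_msc_pos {z : ℂ} (hz : 0 < z.im) : 0 < (msc z).im := by
  have h := im_rel hz
  have h1 := normSq_msc_pos hz
  have h2 := normSq_msc_lt_one hz
  nlinarith

lemma v_sq {z : ℂ} (hz : 0 < z.im) : (2 * msc z + z) ^ 2 = z ^ 2 - 4 := by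
  have h2' : (z:ℂ) ≠ 0 := hz0 hz
  obtain ⟨w, hwdef⟩ : ∃ w, (1 - 4 / z ^ 2) ^ ((1 : ℂ) / 2) = w := ⟨_, rfl⟩
  have hw : w ^ 2 = 1 - 4 / z ^ 2 := by rw [← hwdef]; exact w_sq hz
  have hm : msc z = z * (-1 + w) / 2 := by rw [msc, hwdef]
  have hw' : z ^ 2 * w ^ 2 = z ^ 2 - 4 := by rw [hw]; field_simp
  rw [hm]
  linear_combination hw'

lemma one_sub_sq {z : ℂ} (hz : 0 < z.im) :
    1 - msc z ^ 2 = -(msc z) * (2 * msc z + z) := by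
  linear_combination msc_quad hz

lemma msc_differentiableAt {z : ℂ} (hz : 0 < z.im) : DifferentiableAt ℂ msc z := by
  have h2' : (z:ℂ) ≠ 0 := hz0 hz
  have hslit : (1 - 4 / z ^ 2) ∈ Complex.slitPlane := by
    rw [Complex.mem_slitPlane_iff]
    by_cases h : (1 - 4 / z ^ 2).im = 0
    · exact Or.inl (u_im_re hz h)
    · exact Or.inr h
  have h1 : DifferentiableAt ℂ (fun y : ℂ => 1 - 4 / y ^ 2) z := by
    apply DifferentiableAt.sub (differentiableAt_const _)
    exact DifferentiableAt.div (differentiableAt_const _) (differentiableAt_pow 2)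
      (pow_ne_zero _ h2')
  have h2 : DifferentiableAt ℂ (fun y : ℂ => (1 - 4 / y ^ 2) ^ ((1 : ℂ) / 2)) z :=
    h1.cpow (differentiableAt_const _) hslit
  have : DifferentiableAt ℂ (fun y : ℂ => y * (-1 + (1 - 4 / y ^ 2) ^ ((1 : ℂ) / 2)) / 2) z := by
    apply DifferentiableAt.div_const
    exact differentiableAt_id.mul ((differentiableAt_const _).add h2)
  exact this

lemma msc_deriv {z : ℂ} (hz : 0 < z.im) :
    (2 * msc z + z) * deriv msc z = -(msc z) := by
  have hopen : IsOpen {w : ℂ | 0 < w.im} := isOpen_lt continuous_const Complex.continuous_im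
  have hev : ∀ᶠ w in nhds z, msc w ^ 2 + w * msc w + 1 = 0 := by
    filter_upwards [hopen.mem_nhds hz] with w hw
    exact msc_quad hw
  have hd := (msc_differentiableAt hz).hasDerivAt
  have H1 : HasDerivAt (fun w => msc w ^ 2 + w * msc w + 1)
      (2 * msc z * deriv msc z + (1 * msc z + z * deriv msc z)) z := by
    have hpow := hd.pow 2
    have hmul := (hasDerivAt_id z).mul hd
    have := (hpow.add hmul).add_const 1
    refine this.congr_deriv ?_
    push_cast
    simp only [id]
    ring
  have H2 : HasDerivAt (fun w => msc w ^ 2 + w * msc w + 1) 0 z := by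
    apply (hasDerivAt_const z (0:ℂ)).congr_of_eventuallyEq
    filter_upwards [hev] with w hw
    rw [hw]
  have := H1.unique H2
  linear_combination this

theorem part1 (z : ℂ) (hz : 0 < z.im) :
    ‖msc z‖ = (‖msc z + z‖)⁻¹ ∧ ‖msc z‖ ≤ 1 := by
  refine ⟨?_, le_of_lt (abs_msc_lt_one hz)⟩
  have h := abs_msc_mul hz
  exact eq_inv_of_mul_eq_one_left (by linarith [h] : ‖msc z‖ * ‖msc z + z‖ = 1)



-- R bounds
lemma R_bounds {T κ η F : ℝ} (hT0 : 0 ≤ T)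
    (hfact : T ^ 2 = (κ ^ 2 + η ^ 2) * ((F + 2) ^ 2 + η ^ 2))
    (hF0 : 0 ≤ F) (hF10 : F ≤ 10) (hη1 : 0 < η) (hη2 : η ≤ 10) (hκ0 : 0 ≤ κ) :
    κ + η ≤ T ∧ T ≤ 16 * (κ + η) := by
  have hsm0 : (0:ℝ) ≤ κ ^ 2 + η ^ 2 := by positivity
  constructor
  · have h1 : 4 ≤ (F + 2) ^ 2 + η ^ 2 := by nlinarith
    have h2 : 4 * (κ ^ 2 + η ^ 2) ≤ T ^ 2 := by
      rw [hfact]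
      have := mul_le_mul_of_nonneg_left h1 hsm0
      linarith
    have h3 : (κ + η) ^ 2 ≤ T ^ 2 := by nlinarith [sq_nonneg (κ - η)]
    exact le_of_pow_le_pow_left₀ two_ne_zero hT0 h3
  · have h1 : (F + 2) ^ 2 + η ^ 2 ≤ 244 := by nlinarith
    have h2 : T ^ 2 ≤ 244 * (κ ^ 2 + η ^ 2) := by
      rw [hfact]
      have := mul_le_mul_of_nonneg_left h1 hsm0
      linarith
    have h3 : T ^ 2 ≤ (16 * (κ + η)) ^ 2 := by
      nlinarith [mul_nonneg hκ0 (le_of_lt hη1)]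
    exact le_of_pow_le_pow_left₀ two_ne_zero (by positivity) h3



lemma tiny_sq {x y : ℝ} (hy : 0 ≤ y) (h : x ^ 2 ≤ y ^ 2) : x ≤ y := by
  nlinarith [abs_nonneg x, _root_.sq_abs x, le_abs_self x]

lemma sig_lb {σ η F κ : ℝ} (hσ : 0 < σ) (hη1 : 0 < η) (hη2 : η ≤ 10)
    (hF0 : 0 ≤ F) (hF2 : F ≤ 2) (hκ : κ = 2 - F)
    (hmaster : σ ^ 4 + (F ^ 2 - η ^ 2 - 4) * σ ^ 2 - F ^ 2 * η ^ 2 = 0) :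
    (κ + η) / 10 ≤ σ ^ 2 := by
  have hσ2pos : 0 < σ ^ 2 := by positivity
  have hA0 : (0:ℝ) ≤ 4 - F ^ 2 + η ^ 2 := by nlinarith
  have hA : 4 - F ^ 2 + η ^ 2 ≤ σ ^ 2 := by
    have h : σ ^ 2 * (σ ^ 2 - (4 - F ^ 2 + η ^ 2)) = F ^ 2 * η ^ 2 := by
      linear_combination hmaster
    nlinarith [sq_nonneg (F * η), h, hσ2pos]
  have hFη : F * η ≤ σ ^ 2 := by
    have h4 : (F * η) ^ 2 ≤ (σ ^ 2) ^ 2 := by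
      nlinarith [hmaster, mul_nonneg hA0 hσ2pos.le]
    exact tiny_sq hσ2pos.le h4
  rcases le_or_gt 1 F with hF1 | hF1
  · rw [hκ]; nlinarith [hA, hFη]
  · rw [hκ]; nlinarith [hA]

lemma q_ge_one {q B η : ℝ} (hq : q * (q + B) = 4 * η ^ 2) (hqpos : 0 < q)
    (hqB : q + B ≤ 4 * η ^ 2) (hη1 : 0 < η) : 1 ≤ q := by
  have hqBpos : 0 < q + B := by
    rcases le_or_gt (q + B) 0 with h | h
    · have h1 : q * (q + B) ≤ 0 := mul_nonpos_iff.2 (Or.inl ⟨hqpos.le, h⟩)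
      nlinarith [mul_pos hη1 hη1]
    · exact h
  by_contra hcon
  push_neg at hcon
  have h2 : q * (q + B) < 1 * (q + B) := mul_lt_mul_of_pos_right hcon hqBpos
  linarith [hq, hqB, h2]

lemma b_ge {b η q : ℝ} (hqb : q = 4 * b ^ 2 + 4 * b * η) (hq1 : 1 ≤ q) (hb : 0 < b)
    (hb1 : b ≤ 1) (hη2 : η ≤ 10) : 1 / 44 ≤ b := by
  have e1 : b * b ≤ 1 * b := mul_le_mul_of_nonneg_right hb1 hb.le
  have e2 : b * η ≤ b * 10 := mul_le_mul_of_nonneg_left hη2 hb.le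
  nlinarith [hqb, hq1, e1, e2]

lemma q_ub' {q B κ η : ℝ} (hq : q * (q + B) = 4 * η ^ 2) (hqpos : 0 < q)
    (hBlb : -(4 * κ) + η ^ 2 ≤ B) (hη1 : 0 < η) (hκ0 : 0 ≤ κ) :
    q ≤ 4 * κ + η ^ 2 + 2 * η := by
  by_contra hcon
  push_neg at hcon
  have p1 : 0 < q - 2 * η := by nlinarith [sq_nonneg η]
  have p2 : 0 < q + B - 2 * η := by nlinarith [mul_pos hη1 hη1]
  have h3 : (2 * η) * (2 * η) < q * (q + B) :=
    mul_lt_mul'' (by linarith) (by linarith) (by linarith) (by linarith)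
  linarith [hq, h3]

lemma bulk_bounds {b η κ F s : ℝ} (hb : 0 < b) (hb1 : b ≤ 1) (hη1 : 0 < η) (hη2 : η ≤ 10)
    (hF0 : 0 ≤ F) (hF2 : F ≤ 2) (hκ : κ = 2 - F)
    (hmaster : (2 * b + η) ^ 4 + (F ^ 2 - η ^ 2 - 4) * (2 * b + η) ^ 2 - F ^ 2 * η ^ 2 = 0)
    (hs0 : 0 < s) (hs2 : s ^ 2 = κ + η) (hs5 : s ≤ 5) :
    1 / 1000 * s ≤ b ∧ b ≤ (1 / 1000 : ℝ)⁻¹ * s := by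
  have hκ0 : 0 ≤ κ := by rw [hκ]; linarith
  set σ : ℝ := 2 * b + η with hσdef
  have hσpos : 0 < σ := by rw [hσdef]; linarith
  set q : ℝ := σ ^ 2 - η ^ 2 with hqdef
  set B : ℝ := F ^ 2 - 4 + η ^ 2 with hBdef
  have hq : q * (q + B) = 4 * η ^ 2 := by
    rw [hqdef, hBdef]
    linear_combination hmaster
  have hqb : q = 4 * b ^ 2 + 4 * b * η := by rw [hqdef, hσdef]; ring
  have hqpos : 0 < q := by rw [hqb]; positivity
  have hσlb := sig_lb hσpos hη1 hη2 hF0 hF2 hκ hmaster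
  constructor
  · -- lower bound
    have key : 1 / 1000 * s ^ 2 ≤ b * s := by
      rcases le_or_gt (2 * η) σ with hcase | hcase
      · have hb4 : σ / 4 ≤ b := by rw [hσdef] at hcase ⊢; linarith
        have hσs : s / 4 ≤ σ := by
          apply tiny_sq hσpos.le
          have := sq_nonneg s
          linarith [hσlb, hs2]
        have hb16 : s / 16 ≤ b := by linarith
        have h5 := mul_le_mul_of_nonneg_right hb16 hs0.le
        linarith [h5]
      · have hqB : q + B ≤ 4 * η ^ 2 := by
          rw [hqdef, hBdef]
          have e1 : σ * σ < (2 * η) * (2 * η) :=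
            mul_lt_mul'' hcase hcase hσpos.le hσpos.le
          have e2 : F * F ≤ 2 * 2 := mul_le_mul hF2 hF2 hF0 (by norm_num)
          nlinarith [e1, e2]
        have hq1 : 1 ≤ q := q_ge_one hq hqpos hqB hη1
        have hb44 : 1 / 44 ≤ b := b_ge hqb hq1 hb hb1 hη2
        have h6 := mul_le_mul_of_nonneg_right hb44 hs0.le
        have h7 := mul_le_mul_of_nonneg_right hs5 hs0.le
        nlinarith [h6, h7]
    have h2 : (1 / 1000 * s) * s ≤ b * s := by nlinarith [key]
    exact le_of_mul_le_mul_right h2 hs0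
  · -- upper bound
    have hBlb : -(4 * κ) + η ^ 2 ≤ B := by
      rw [hBdef, hκ]
      nlinarith [sq_nonneg (F - 2)]
    have hqub : q ≤ 4 * κ + η ^ 2 + 2 * η := q_ub' hq hqpos hBlb hη1 hκ0
    have hηη : η * η ≤ 10 * η := mul_le_mul_of_nonneg_right hη2 hη1.le
    have hσub : σ ^ 2 ≤ 22 * (κ + η) := by
      have : σ ^ 2 = q + η ^ 2 := by rw [hqdef]; ring
      nlinarith [hqub, hηη, this]
    have hbσ : b ≤ σ / 2 := by rw [hσdef]; linarith
    have hb2 : b ^ 2 ≤ 6 * s ^ 2 := by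
      have e1 : b * b ≤ (σ / 2) * (σ / 2) := mul_le_mul hbσ hbσ hb.le (by linarith)
      nlinarith [e1, hσub, hs2]
    rw [show ((1:ℝ)/1000)⁻¹ = 1000 by norm_num]
    apply tiny_sq (by positivity)
    have : (0:ℝ) ≤ s ^ 2 := sq_nonneg s
    nlinarith [hb2]

-- outside bounds (|E| ≥ 2)
lemma out_bounds {b η κ F s : ℝ} (hb : 0 < b) (hb1 : b ≤ 1) (hη1 : 0 < η) (hη2 : η ≤ 10)
    (hF2 : 2 ≤ F) (hF10 : F ≤ 10) (hκ : κ = F - 2)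
    (hmaster : (2 * b + η) ^ 4 + (F ^ 2 - η ^ 2 - 4) * (2 * b + η) ^ 2 - F ^ 2 * η ^ 2 = 0)
    (hs0 : 0 < s) (hs2 : s ^ 2 = κ + η) (hs5 : s ≤ 5) :
    1 / 1000 * (η / s) ≤ b ∧ b ≤ (1 / 1000 : ℝ)⁻¹ * (η / s) := by
  have hκ0 : 0 ≤ κ := by rw [hκ]; linarith
  set σ : ℝ := 2 * b + η with hσdef
  have hσpos : 0 < σ := by rw [hσdef]; linarith
  set q : ℝ := σ ^ 2 - η ^ 2 with hqdef
  set B : ℝ := F ^ 2 - 4 + η ^ 2 with hBdef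
  have hq : q * (q + B) = 4 * η ^ 2 := by
    rw [hqdef, hBdef]
    linear_combination hmaster
  have hqpos : 0 < q := by rw [hqdef, hσdef]; nlinarith
  have hB0 : 0 ≤ B := by rw [hBdef]; nlinarith
  have hBlb : 4 * κ ≤ B := by rw [hBdef, hκ]; nlinarith
  have hBub : B ≤ 12 * κ + 10 * η := by rw [hBdef, hκ]; nlinarith
  have hqB2η : 2 * η ≤ q + B := by nlinarith [hq, sq_nonneg (q + B - 2 * η)]
  have hqBκη : κ + η ≤ q + B := by nlinarith
  have hqub : q ≤ 2 * η := by nlinarith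
  have hqBub : q + B ≤ 12 * (κ + η) := by linarith
  have hqlb : η ^ 2 ≤ 3 * q * (κ + η) := by nlinarith
  have hquu : q * (κ + η) ≤ 4 * η ^ 2 := by nlinarith
  have hqb : q = 4 * b ^ 2 + 4 * b * η := by rw [hqdef, hσdef]; ring
  -- upper: b * s ≤ η
  have hup : b * s ≤ η := by
    have h1 : (b * s) ^ 2 ≤ η ^ 2 := by nlinarith [hs2, mul_nonneg (mul_nonneg hb.le hη1.le) hκ0]
    nlinarith [mul_nonneg hb.le hs0.le]
  -- lower: b * s ≥ η/1000
  have hlo : η / 1000 ≤ b * s := by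
    have hγ : 12 * (b * s) ^ 2 + 12 * (b * s) * η * s ≥ η ^ 2 := by nlinarith [hqlb, hs2]
    by_contra hcon
    push_neg at hcon
    have hγ0 : 0 ≤ b * s := mul_nonneg hb.le hs0.le
    have e1 : (b * s) * (b * s) ≤ (η / 1000) * (η / 1000) :=
      mul_le_mul hcon.le hcon.le hγ0 (by positivity)
    have e2 : (b * s) * (η * s) ≤ (η / 1000) * (η * 5) := by
      apply mul_le_mul hcon.le _ (by positivity) (by positivity)
      exact mul_le_mul_of_nonneg_left hs5 hη1.le
    nlinarith [hγ, e1, e2, mul_pos hη1 hη1]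
  constructor
  · have he : (1 / 1000 : ℝ) * (η / s) = (η / 1000) / s := by ring
    rw [he, div_le_iff₀ hs0]
    linarith [hlo]
  · have he : ((1 / 1000 : ℝ))⁻¹ * (η / s) = (1000 * η) / s := by
      rw [show ((1:ℝ)/1000)⁻¹ = 1000 by norm_num]; ring
    rw [he, le_div_iff₀ hs0]
    nlinarith [hup, hη1]


theorem part2 (E η : ℝ) (hE : E ∈ Set.Icc (-10 : ℝ) 10) (hη : η ∈ Set.Ioc (0 : ℝ) 10) :
    ((1 / 1000 : ℝ) ≤ ‖msc (E + η * Complex.I)‖ ∧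
        ‖msc (E + η * Complex.I)‖ ≤ 1 - (1 / 1000 : ℝ) * η) ∧
      ‖deriv msc (E + η * Complex.I)‖
        ≤ (1 / 1000 : ℝ)⁻¹ / Real.sqrt (|(|E| - 2)| + η) ∧
      ((1 / 1000 : ℝ) * Real.sqrt (|(|E| - 2)| + η)
          ≤ ‖1 - msc (E + η * Complex.I) ^ 2‖ ∧
        ‖1 - msc (E + η * Complex.I) ^ 2‖
          ≤ (1 / 1000 : ℝ)⁻¹ * Real.sqrt (|(|E| - 2)| + η)) ∧
      ((|E| ≤ 2 →
          (1 / 1000 : ℝ) * Real.sqrt (|(|E| - 2)| + η) ≤ (msc (E + η * Complex.I)).im ∧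
          (msc (E + η * Complex.I)).im ≤ (1 / 1000 : ℝ)⁻¹ * Real.sqrt (|(|E| - 2)| + η)) ∧
        (2 ≤ |E| →
          (1 / 1000 : ℝ) * (η / Real.sqrt (|(|E| - 2)| + η)) ≤ (msc (E + η * Complex.I)).im ∧
          (msc (E + η * Complex.I)).im
            ≤ (1 / 1000 : ℝ)⁻¹ * (η / Real.sqrt (|(|E| - 2)| + η)))) := by
  obtain ⟨hE1, hE2⟩ := hE
  obtain ⟨hη1, hη2⟩ := hη
  set z : ℂ := (E : ℂ) + (η : ℂ) * Complex.I with hzdef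
  have hzre : z.re = E := by simp [hzdef]
  have hzim : z.im = η := by simp [hzdef]
  have hz : 0 < z.im := by rw [hzim]; exact hη1
  set a : ℝ := (msc z).re with hadef
  set b : ℝ := (msc z).im with hbdef
  have hb0 : 0 < b := im_msc_pos hz
  have hnsq : Complex.normSq (msc z) = a ^ 2 + b ^ 2 := by
    rw [Complex.normSq_apply]; ring
  have habs_sq : ‖msc z‖ ^ 2 = a ^ 2 + b ^ 2 := by
    rw [Complex.sq_norm, hnsq]
  have habs_le : ‖msc z‖ ≤ 1 := le_of_lt (abs_msc_lt_one hz)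
  have habs_nonneg : 0 ≤ ‖msc z‖ := norm_nonneg _
  have hb_le : b ≤ 1 := by
    have h1 : |b| ≤ ‖msc z‖ := Complex.abs_im_le_norm (msc z)
    have := le_abs_self b
    linarith
  have habsz : ‖z‖ ≤ 20 := by
    have h1 : ‖z‖ ≤ ‖(E : ℂ)‖ + ‖(η : ℂ) * Complex.I‖ := by
      rw [hzdef]; exact norm_add_le _ _
    rw [norm_mul, Complex.norm_I, Complex.norm_real, Complex.norm_real, Real.norm_eq_abs, Real.norm_eq_abs] at h1
    have hE' : |E| ≤ 10 := abs_le.2 ⟨hE1, hE2⟩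
    have hη' : |η| ≤ 10 := abs_le.2 ⟨by linarith, hη2⟩
    linarith [h1]
  have habs_lb : 1 / 21 ≤ ‖msc z‖ := by
    have hmul := abs_msc_mul hz
    have h1 : ‖msc z + z‖ ≤ ‖msc z‖ + ‖z‖ :=
      norm_add_le _ _
    have h2 : 0 < ‖msc z + z‖ := by
      rcases eq_or_lt_of_le (norm_nonneg (msc z + z)) with h | h
      · rw [← h] at hmul; simp at hmul
      · exact h
    have h3 : ‖msc z + z‖ ≤ 21 := by linarith
    have h4 := mul_le_mul_of_nonneg_left h3 habs_nonneg
    linarith [hmul, h4]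
  have him : b * (1 - (a ^ 2 + b ^ 2)) = η * (a ^ 2 + b ^ 2) := by
    have := im_rel hz
    rw [hnsq, hzim] at this
    exact this
  have hn_lb : 1 / 441 ≤ a ^ 2 + b ^ 2 := by
    have h4 := mul_le_mul habs_lb habs_lb (by norm_num) habs_nonneg
    linarith [habs_sq, h4]
  have hn_ub : a ^ 2 + b ^ 2 ≤ 1 := by
    have h4 := mul_le_mul habs_le habs_le habs_nonneg zero_le_one
    linarith [habs_sq, h4]
  set α : ℝ := 2 * a + E with hαdef
  set σ : ℝ := 2 * b + η with hσdef
  have hvre : (2 * msc z + z).re = α := by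
    simp [Complex.add_re, Complex.mul_re, hzre, hadef, hαdef]
  have hvim : (2 * msc z + z).im = σ := by
    simp [Complex.add_im, Complex.mul_im, hzim, hbdef, hσdef]
  have hvsq := v_sq hz
  have r1 : α ^ 2 - σ ^ 2 = E ^ 2 - η ^ 2 - 4 := by
    have h := congrArg Complex.re hvsq
    simp only [pow_two, Complex.mul_re, Complex.sub_re, Complex.re_ofNat, hvre, hvim,
      hzre, hzim] at h
    linear_combination h
  have r2 : α * σ = E * η := by
    have h := congrArg Complex.im hvsq
    simp only [pow_two, Complex.mul_im, Complex.sub_im, Complex.im_ofNat, hvre, hvim,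
      hzre, hzim] at h
    linarith [h]
  have hmaster : σ ^ 4 + (E ^ 2 - η ^ 2 - 4) * σ ^ 2 - E ^ 2 * η ^ 2 = 0 := by
    linear_combination (-(σ ^ 2)) * r1 + (α * σ + E * η) * r2
  set F : ℝ := |E| with hFdef
  have hF2 : F ^ 2 = E ^ 2 := _root_.sq_abs E
  have hF0 : 0 ≤ F := abs_nonneg E
  have hF10 : F ≤ 10 := abs_le.2 ⟨hE1, hE2⟩
  set κ : ℝ := |F - 2| with hκdef
  have hκ0 : 0 ≤ κ := abs_nonneg _
  have hκ8 : κ ≤ 8 := abs_le.2 ⟨by linarith, by linarith⟩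
  have hκsq : (F - 2) ^ 2 = κ ^ 2 := (_root_.sq_abs (F - 2)).symm
  set s : ℝ := Real.sqrt (κ + η) with hsdef
  have hs2 : s ^ 2 = κ + η := Real.sq_sqrt (by positivity)
  have hs0 : 0 < s := Real.sqrt_pos.2 (by positivity)
  have hs5 : s ≤ 5 := by
    rw [hsdef]
    calc Real.sqrt (κ + η) ≤ Real.sqrt 25 := Real.sqrt_le_sqrt (by linarith)
      _ = 5 := by
          rw [show (25:ℝ) = 5 ^ 2 by norm_num]
          exact Real.sqrt_sq (by norm_num)
  have hmasterF : σ ^ 4 + (F ^ 2 - η ^ 2 - 4) * σ ^ 2 - F ^ 2 * η ^ 2 = 0 := by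
    rw [hF2]; exact hmaster
  have hR2 : (α ^ 2 + σ ^ 2) ^ 2 = (E ^ 2 - η ^ 2 - 4) ^ 2 + 4 * E ^ 2 * η ^ 2 := by
    linear_combination (α ^ 2 - σ ^ 2 + E ^ 2 - η ^ 2 - 4) * r1 + (4 * α * σ + 4 * E * η) * r2
  have hfact : (α ^ 2 + σ ^ 2) ^ 2 = (κ ^ 2 + η ^ 2) * ((F + 2) ^ 2 + η ^ 2) := by
    rw [hR2, ← hκsq]
    linear_combination (-(E ^ 2 + F ^ 2 + 2 * η ^ 2 - 8)) * hF2
  have hT0 : (0:ℝ) ≤ α ^ 2 + σ ^ 2 := by positivity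
  obtain ⟨hR_lb, hR_ub⟩ := R_bounds hT0 hfact hF0 hF10 hη1 hη2 hκ0
  have habsv : ‖2 * msc z + z‖ = Real.sqrt (α ^ 2 + σ ^ 2) := by
    rw [Complex.norm_def, Complex.normSq_apply, hvre, hvim]
    congr 1
    ring
  have habsv_lb : s ≤ ‖2 * msc z + z‖ := by
    rw [habsv, hsdef]
    exact Real.sqrt_le_sqrt hR_lb
  have habsv_ub : ‖2 * msc z + z‖ ≤ 4 * s := by
    rw [habsv]
    have h1 : Real.sqrt (α ^ 2 + σ ^ 2) ≤ Real.sqrt (16 * (κ + η)) := Real.sqrt_le_sqrt hR_ub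
    rw [Real.sqrt_mul (by norm_num : (0:ℝ) ≤ 16)] at h1
    rw [show (16:ℝ) = 4 ^ 2 by norm_num, Real.sqrt_sq (by norm_num : (0:ℝ) ≤ 4)] at h1
    exact h1
  refine ⟨⟨by linarith [habs_lb], ?_⟩, ?_, ⟨?_, ?_⟩, ?_, ?_⟩
  · -- upper bound on |msc|
    have e3 : b * (1 - (a ^ 2 + b ^ 2)) ≤ 1 * (1 - (a ^ 2 + b ^ 2)) :=
      mul_le_mul_of_nonneg_right hb_le (by linarith)
    have e4 : η * (1 / 441) ≤ η * (a ^ 2 + b ^ 2) := mul_le_mul_of_nonneg_left hn_lb hη1.le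
    have hnub2 : a ^ 2 + b ^ 2 ≤ 1 - η / 441 := by linarith [him, e3, e4]
    have h8 : ‖msc z‖ ^ 2 ≤ (1 - η / 882) ^ 2 := by
      rw [habs_sq]
      linarith [hnub2, sq_nonneg η]
    have h9 : ‖msc z‖ ≤ 1 - η / 882 := tiny_sq (by linarith) h8
    linarith
  · -- derivative bound
    have hder := msc_deriv hz
    have h9 : ‖2 * msc z + z‖ * ‖deriv msc z‖
        = ‖msc z‖ := by
      rw [← norm_mul, hder, norm_neg]
    have h10 : ‖deriv msc z‖ * s ≤ 1 := by
      calc ‖deriv msc z‖ * s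
          ≤ ‖deriv msc z‖ * ‖2 * msc z + z‖ :=
            mul_le_mul_of_nonneg_left habsv_lb (norm_nonneg _)
        _ = ‖msc z‖ := by rw [mul_comm]; exact h9
        _ ≤ 1 := habs_le
    rw [show ((1:ℝ)/1000)⁻¹ = (1000:ℝ) by norm_num, le_div_iff₀ hs0]
    linarith [h10]
  · -- |1 - msc²| lower
    have habs1m : ‖1 - msc z ^ 2‖
        = ‖msc z‖ * ‖2 * msc z + z‖ := by
      rw [one_sub_sq hz, norm_mul, norm_neg]
    rw [habs1m]
    have := mul_le_mul habs_lb habsv_lb hs0.le habs_nonneg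
    linarith [this, hs0]
  · -- |1 - msc²| upper
    have habs1m : ‖1 - msc z ^ 2‖
        = ‖msc z‖ * ‖2 * msc z + z‖ := by
      rw [one_sub_sq hz, norm_mul, norm_neg]
    rw [habs1m, show ((1:ℝ)/1000)⁻¹ = (1000:ℝ) by norm_num]
    have := mul_le_mul habs_le habsv_ub (norm_nonneg _) (by norm_num)
    linarith [this, hs0]
  · -- bulk
    intro hF2'
    have hκeq : κ = 2 - F := by
      rw [hκdef, _root_.abs_of_nonpos (by linarith : F - 2 ≤ 0)]; ring
    exact bulk_bounds hb0 hb_le hη1 hη2 hF0 hF2' hκeq hmasterF hs0 hs2 hs5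
  · -- outside
    intro hF2'
    have hκeq : κ = F - 2 := by
      rw [hκdef, _root_.abs_of_nonneg (by linarith : (0:ℝ) ≤ F - 2)]
    exact out_bounds hb0 hb_le hη1 hη2 hF2' hF10 hκeq hmasterF hs0 hs2 hs5



/-- **Properties of the semicircle Stieltjes transform** (Lemma 4.1): on `ℂ⁺`,
`|m_sc(z)| = |m_sc(z) + z|⁻¹ ≤ 1`, and for `z = E + iη` with `E ∈ [-10, 10]`, `η ∈ (0, 10]`
and `κ = ||E| - 2|`: `c ≤ |m_sc| ≤ 1 - cη`, `|∂_z m_sc| ≤ c⁻¹ (κ+η)^{-1/2}`,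
`|1 - m_sc²| ≍ √(κ+η)`, and `Im m_sc ≍ √(κ+η)` for `|E| ≤ 2`, `Im m_sc ≍ η/√(κ+η)`
for `|E| ≥ 2`. -/
theorem msc_properties :
    (∀ z : ℂ, 0 < z.im →
      norm (msc z) = (norm (msc z + z))⁻¹ ∧ norm (msc z) ≤ 1) ∧
    ∃ c > (0:ℝ), ∀ E η : ℝ, E ∈ Set.Icc (-10 : ℝ) 10 → η ∈ Set.Ioc (0 : ℝ) 10 →
      (c ≤ norm (msc (E + η * Complex.I)) ∧
        norm (msc (E + η * Complex.I)) ≤ 1 - c * η) ∧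
      norm (deriv msc (E + η * Complex.I))
        ≤ c⁻¹ / Real.sqrt (|(|E| - 2)| + η) ∧
      (c * Real.sqrt (|(|E| - 2)| + η) ≤ norm (1 - msc (E + η * Complex.I) ^ 2) ∧
        norm (1 - msc (E + η * Complex.I) ^ 2)
          ≤ c⁻¹ * Real.sqrt (|(|E| - 2)| + η)) ∧
      ((|E| ≤ 2 →
          c * Real.sqrt (|(|E| - 2)| + η) ≤ (msc (E + η * Complex.I)).im ∧
          (msc (E + η * Complex.I)).im ≤ c⁻¹ * Real.sqrt (|(|E| - 2)| + η)) ∧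
        (2 ≤ |E| →
          c * (η / Real.sqrt (|(|E| - 2)| + η)) ≤ (msc (E + η * Complex.I)).im ∧
          (msc (E + η * Complex.I)).im ≤ c⁻¹ * (η / Real.sqrt (|(|E| - 2)| + η)))) :=
  ⟨part1, 1 / 1000, by norm_num, part2⟩
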